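/- arXiv:2206.01012 — 2 statements merged into one kernel-verified Lean document; each statement's English description precedes it below -/
import Mathlib

section
/- With the spike-and-slab mixture of the previous context (0<ν₀<ν₁, α∈(0,1)), the posterior inclusion probability satisfies P(δ=1|β) ≥ 1/2 if and only if |β| ≥ s(ν₀,ν₁,α), where s(ν₀,ν₁,α) = sqrt( 2 ν₀ν₁/(ν₁-ν₀) · log( sqrt(ν₁/ν₀) · (1-α)/α ) ), provided the expression under the square root is nonnegative. -/
/-- Centered Gaussian density with variance ν. -/
noncomputable def gaussDensity (ν x : ℝ) : ℝ :=
  (Real.sqrt (2 * Real.pi * ν))⁻¹ * Real.exp (-x ^ 2 / (2 * ν))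

/-- The spike-and-slab posterior inclusion probability exceeds 1/2 iff |β| exceeds
the threshold s(ν₀,ν₁,α). -/
theorem stmt_1 (ν₀ ν₁ α β : ℝ) (h₀ : 0 < ν₀) (h₁ : ν₀ < ν₁) (hα : α ∈ Set.Ioo (0:ℝ) 1)
    (hthr : 1 ≤ Real.sqrt (ν₁ / ν₀) * (1 - α) / α) :
    (1 / 2 ≤ α * gaussDensity ν₁ β /
        (α * gaussDensity ν₁ β + (1 - α) * gaussDensity ν₀ β))
      ↔ Real.sqrt (2 * (ν₀ * ν₁ / (ν₁ - ν₀)) *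
          Real.log (Real.sqrt (ν₁ / ν₀) * (1 - α) / α)) ≤ |β| := by
  obtain ⟨hα0, hα1⟩ := hα
  have hα1' : 0 < 1 - α := by linarith
  have hν₁ : 0 < ν₁ := h₀.trans h₁
  have hd : 0 < ν₁ - ν₀ := sub_pos.2 h₁
  have hπ : 0 < Real.pi := Real.pi_pos
  set L := Real.log (Real.sqrt (ν₁ / ν₀) * (1 - α) / α) with hLdef
  have hL : 0 ≤ L := Real.log_nonneg hthr
  have hg₀ : 0 < gaussDensity ν₀ β := by unfold gaussDensity; positivity
  have hg₁ : 0 < gaussDensity ν₁ β := by unfold gaussDensity; positivity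
  set A := α * gaussDensity ν₁ β with hAdef
  set B := (1 - α) * gaussDensity ν₀ β with hBdef
  have hA : 0 < A := mul_pos hα0 hg₁
  have hB : 0 < B := mul_pos hα1' hg₀
  have step1 : (1 / 2 ≤ A / (A + B)) ↔ B ≤ A := by
    rw [le_div_iff₀ (by linarith)]
    constructor <;> intro h <;> linarith
  have logT : L = (Real.log ν₁ - Real.log ν₀) / 2 + Real.log (1 - α) - Real.log α := by
    rw [hLdef, Real.log_div (by positivity) (ne_of_gt hα0),
      Real.log_mul (by positivity) (ne_of_gt hα1'),
      Real.log_sqrt (by positivity), Real.log_div (ne_of_gt hν₁) (ne_of_gt h₀)]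
  have logdiff : Real.log A - Real.log B = β ^ 2 * (ν₁ - ν₀) / (2 * ν₀ * ν₁) - L := by
    rw [hAdef, hBdef, Real.log_mul (ne_of_gt hα0) (ne_of_gt hg₁),
      Real.log_mul (ne_of_gt hα1') (ne_of_gt hg₀)]
    unfold gaussDensity
    rw [Real.log_mul (by positivity) (by positivity),
      Real.log_mul (by positivity) (by positivity),
      Real.log_inv, Real.log_inv, Real.log_exp, Real.log_exp,
      Real.log_sqrt (by positivity), Real.log_sqrt (by positivity),
      Real.log_mul (by positivity) (ne_of_gt hν₁),
      Real.log_mul (by positivity) (ne_of_gt h₀), logT]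
    field_simp
    ring
  have step2 : B ≤ A ↔ L ≤ β ^ 2 * (ν₁ - ν₀) / (2 * ν₀ * ν₁) := by
    rw [← Real.log_le_log_iff hB hA]
    constructor <;> intro h <;> linarith
  have hc : (0:ℝ) < (ν₁ - ν₀) / (2 * ν₀ * ν₁) := by positivity
  have step3 : Real.sqrt (2 * (ν₀ * ν₁ / (ν₁ - ν₀)) * L) ≤ |β|
      ↔ L ≤ β ^ 2 * (ν₁ - ν₀) / (2 * ν₀ * ν₁) := by
    rw [← Real.sqrt_sq_eq_abs, Real.sqrt_le_sqrt_iff (by positivity)]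
    have harg : 2 * (ν₀ * ν₁ / (ν₁ - ν₀)) * L = L / ((ν₁ - ν₀) / (2 * ν₀ * ν₁)) := by
      field_simp
    rw [harg, div_le_iff₀ hc]
    constructor <;> intro h
    · calc L ≤ β ^ 2 * ((ν₁ - ν₀) / (2 * ν₀ * ν₁)) := h
        _ = β ^ 2 * (ν₁ - ν₀) / (2 * ν₀ * ν₁) := by ring
    · calc L ≤ β ^ 2 * (ν₁ - ν₀) / (2 * ν₀ * ν₁) := h
        _ = β ^ 2 * ((ν₁ - ν₀) / (2 * ν₀ * ν₁)) := by ring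
  rw [step1, step2, step3]
end

section
/- Fix ν₁ > 0 and α ∈ (0,1). The threshold s(ν₀,ν₁,α) = sqrt( 2ν₀ν₁/(ν₁-ν₀) · log(√(ν₁/ν₀)·(1-α)/α) ), viewed as a function of ν₀ on an interval (0, ν₀^max) where it is well defined, is strictly increasing in ν₀ near 0; hence larger spike variances ν₀ lead to sparser selected models (fewer coefficients exceed the threshold). -/
/-- The spike-and-slab selection threshold s(ν₀,ν₁,α), as a function of the spike
variance ν₀, is strictly increasing near 0: there exists ε > 0 such that it is
strictly increasing on (0, ε). -/
theorem stmt_18 (ν₁ α : ℝ) (hν₁ : 0 < ν₁) (hα : α ∈ Set.Ioo (0:ℝ) 1) :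
    ∃ ε > 0, StrictMonoOn
      (fun ν₀ : ℝ => Real.sqrt (2 * (ν₀ * ν₁ / (ν₁ - ν₀)) *
        Real.log (Real.sqrt (ν₁ / ν₀) * (1 - α) / α)))
      (Set.Ioo 0 ε) := by
  obtain ⟨hα0, hα1⟩ := hα
  set c : ℝ := Real.log ((1 - α)/α) with hc
  set ε : ℝ := min ν₁ (Real.exp (Real.log ν₁ + 2*c - 2)) with hε
  have hεpos : 0 < ε := lt_min hν₁ (Real.exp_pos _)
  set G : ℝ → ℝ := fun t => 2 * (t * ν₁ / (ν₁ - t)) * ((Real.log ν₁ - Real.log t)/2 + c)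
    with hG
  -- basic facts on the interval
  have key : ∀ t ∈ Set.Ioo (0:ℝ) ε, 0 < ν₁ - t ∧ 1 < (Real.log ν₁ - Real.log t)/2 + c := by
    intro t ht
    obtain ⟨ht0, htε⟩ := ht
    constructor
    · have : t < ν₁ := lt_of_lt_of_le htε (min_le_left _ _)
      linarith
    · have h2 : t < Real.exp (Real.log ν₁ + 2*c - 2) :=
        lt_of_lt_of_le htε (min_le_right _ _)
      have := Real.log_lt_log ht0 h2
      rw [Real.log_exp] at this
      linarith
  -- strict monotonicity of G
  have hGmono : StrictMonoOn G (Set.Ioo 0 ε) := by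
    apply strictMonoOn_of_deriv_pos (convex_Ioo _ _)
    · apply ContinuousOn.mul
      · apply ContinuousOn.mul continuousOn_const
        apply ContinuousOn.div (continuousOn_id.mul continuousOn_const)
          (continuousOn_const.sub continuousOn_id)
        intro t ht
        exact ne_of_gt (key t ht).1
      · apply ContinuousOn.add _ continuousOn_const
        apply ContinuousOn.div_const
        apply ContinuousOn.sub continuousOn_const
        exact Real.continuousOn_log.mono (fun t ht => ne_of_gt ht.1)
    · intro t ht
      rw [interior_Ioo] at ht
      obtain ⟨hd, hL⟩ := key t ht
      have ht0 : (0:ℝ) < t := ht.1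
      have hden : ν₁ - t ≠ 0 := ne_of_gt hd
      have h1 : HasDerivAt (fun t : ℝ => t * ν₁ / (ν₁ - t))
          ((1 * ν₁ * (ν₁ - t) - t * ν₁ * (0 - 1)) / (ν₁ - t) ^ 2) t :=
        ((hasDerivAt_id' (x := t)).mul_const ν₁).div
          ((hasDerivAt_const t ν₁).sub (hasDerivAt_id' (x := t))) hden
      have h2 : HasDerivAt (fun t : ℝ => (Real.log ν₁ - Real.log t)/2 + c)
          ((0 - 1/t)/2) t := by
        have := (((hasDerivAt_const t (Real.log ν₁)).sub
          (Real.hasDerivAt_log (ne_of_gt ht0))).div_const 2).add_const c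
        simpa using this
      have hD : HasDerivAt G
          (2 * ((1 * ν₁ * (ν₁ - t) - t * ν₁ * (0 - 1)) / (ν₁ - t) ^ 2) * ((Real.log ν₁ - Real.log t)/2 + c)
            + 2 * (t * ν₁ / (ν₁ - t)) * ((0 - 1/t)/2)) t := by
        exact (h1.const_mul 2).mul h2
      rw [hD.deriv]
      have e1 : 1 * ν₁ * (ν₁ - t) - t * ν₁ * (0 - 1) = ν₁ * ν₁ := by ring
      rw [e1]
      set L := (Real.log ν₁ - Real.log t)/2 + c with hLdef
      clear_value L
      have key2 : 2 * (ν₁ * ν₁ / (ν₁ - t)^2) * L + 2 * (t * ν₁ / (ν₁ - t)) * ((0 - 1/t)/2)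
          = ν₁ / (ν₁ - t) * (2 * ν₁ / (ν₁ - t) * L - 1) := by
        field_simp
        ring
      rw [key2]
      have hq : 0 < ν₁ / (ν₁ - t) := div_pos hν₁ hd
      have h2q : 1 < 2 * ν₁ / (ν₁ - t) * L := by
        have hgt : 2 ≤ 2 * ν₁ / (ν₁ - t) := by
          rw [le_div_iff₀ hd]
          nlinarith
        have h3 : 2 * L ≤ 2 * ν₁ / (ν₁ - t) * L :=
          mul_le_mul_of_nonneg_right hgt (by linarith)
        linarith
      exact mul_pos hq (by linarith)
  refine ⟨ε, hεpos, ?_⟩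
  have heq : ∀ t ∈ Set.Ioo (0:ℝ) ε,
      2 * (t * ν₁ / (ν₁ - t)) * Real.log (Real.sqrt (ν₁ / t) * (1 - α) / α) = G t := by
    intro t ht
    have ht0 : (0:ℝ) < t := ht.1
    have hr : (0:ℝ) < ν₁ / t := div_pos hν₁ ht0
    have hsq : Real.sqrt (ν₁ / t) ≠ 0 := ne_of_gt (Real.sqrt_pos.mpr hr)
    have hfrac : (1 - α)/α ≠ 0 := ne_of_gt (div_pos (by linarith) hα0)
    have : Real.log (Real.sqrt (ν₁ / t) * (1 - α) / α)
        = (Real.log ν₁ - Real.log t)/2 + c := by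
      rw [mul_div_assoc, Real.log_mul hsq hfrac, Real.log_sqrt (le_of_lt hr),
        Real.log_div (ne_of_gt hν₁) (ne_of_gt ht0), hc]
    rw [this, hG]
  intro x hx y hy hxy
  have hGx : 0 ≤ G x := by
    obtain ⟨hd, hL⟩ := key x hx
    have h1 : 0 < x * ν₁ / (ν₁ - x) := div_pos (mul_pos hx.1 hν₁) hd
    simp only [hG]
    nlinarith
  simp only [heq x hx, heq y hy]
  exact Real.sqrt_lt_sqrt hGx (hGmono hx hy hxy)
end
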